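/- Let ν be a finite Borel measure on ℝ and let g : ℝ → ℝ be ν-integrable and antitone (nonincreasing). Then for every w ∈ ℝ: (∫_{(−∞,w]} g dν) · ν(ℝ) ≥ (∫_ℝ g dν) · ν((−∞,w]). If moreover g is strictly antitone and 0 < ν((−∞,w]) < ν(ℝ), then the inequality is strict. -/

import Mathlib

open MeasureTheory Set

/-- Correlation-type inequality. Let `ν` be a finite Borel
measure on `ℝ` and let `g` be `ν`-integrable and antitone. Then for every
`w`, `(∫_{(−∞,w]} g dν) · ν(ℝ) ≥ (∫_ℝ g dν) · ν((−∞,w])`; and if `g` is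
strictly antitone and `0 < ν((−∞,w]) < ν(ℝ)`, the inequality is strict. -/
theorem stmt_14 (ν : Measure ℝ) [IsFiniteMeasure ν]
    (g : ℝ → ℝ) (hint : Integrable g ν) (hanti : Antitone g) :
    ∀ w : ℝ,
      (∫ x, g x ∂ν) * (ν (Iic w)).toReal ≤
        (∫ x in Iic w, g x ∂ν) * (ν univ).toReal ∧
      (StrictAnti g → 0 < ν (Iic w) → ν (Iic w) < ν univ →
        (∫ x, g x ∂ν) * (ν (Iic w)).toReal <
          (∫ x in Iic w, g x ∂ν) * (ν univ).toReal) := by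
  intro w
  have hA : MeasurableSet (Iic w) := measurableSet_Iic
  have hsplit : ∫ x in Iic w, g x ∂ν + ∫ x in Ioi w, g x ∂ν = ∫ x, g x ∂ν := by
    have := integral_add_compl hA hint
    rwa [compl_Iic] at this
  have hmeas : (ν univ).toReal = (ν (Iic w)).toReal + (ν (Ioi w)).toReal := by
    have h : ν (Iic w) + ν (Ioi w) = ν univ := by
      rw [← measure_add_measure_compl hA, compl_Iic]
    rw [← h, ENNReal.toReal_add (measure_ne_top _ _) (measure_ne_top _ _)]
  have ha0 : (0:ℝ) ≤ (ν (Iic w)).toReal := ENNReal.toReal_nonneg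
  have hb0 : (0:ℝ) ≤ (ν (Ioi w)).toReal := ENNReal.toReal_nonneg
  have hIA : g w * (ν (Iic w)).toReal ≤ ∫ x in Iic w, g x ∂ν :=
    setIntegral_ge_of_const_le_real hA (measure_ne_top _ _)
      (fun x hx => hanti hx) hint.integrableOn
  have hconst : IntegrableOn (fun _ : ℝ => g w) (Ioi w) ν :=
    integrableOn_const (measure_ne_top ν _)
  have hIB : ∫ x in Ioi w, g x ∂ν ≤ g w * (ν (Ioi w)).toReal := by
    have h := setIntegral_mono_on (f := g) (g := fun _ : ℝ => g w)
      hint.integrableOn hconst measurableSet_Ioi (fun x hx => hanti (le_of_lt hx))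
    simpa [setIntegral_const, smul_eq_mul, mul_comm, measureReal_def] using h
  constructor
  · rw [← hsplit, hmeas]
    nlinarith [mul_le_mul_of_nonneg_right hIA hb0, mul_le_mul_of_nonneg_right hIB ha0]
  · intro hsg hpos hlt
    have ha' : (0:ℝ) < (ν (Iic w)).toReal :=
      ENNReal.toReal_pos hpos.ne' (measure_ne_top _ _)
    have hBpos : 0 < ν (Ioi w) := by
      by_contra h
      push_neg at h
      have h0 : ν (Ioi w) = 0 := le_antisymm h zero_le
      have : ν univ = ν (Iic w) := by
        rw [← measure_add_measure_compl hA, compl_Iic, h0, add_zero]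
      exact absurd (this ▸ hlt) (lt_irrefl _)
    have hb' : (0:ℝ) < (ν (Ioi w)).toReal :=
      ENNReal.toReal_pos hBpos.ne' (measure_ne_top _ _)
    have hIB' : ∫ x in Ioi w, g x ∂ν < g w * (ν (Ioi w)).toReal := by
      have hpos' : 0 < ∫ x in Ioi w, (g w - g x) ∂ν := by
        rw [setIntegral_pos_iff_support_of_nonneg_ae]
        · refine lt_of_lt_of_le hBpos (measure_mono ?_)
          intro x hx
          exact ⟨sub_ne_zero.mpr (hsg hx).ne', hx⟩
        · filter_upwards [ae_restrict_mem measurableSet_Ioi] with x hx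
          simpa using sub_nonneg.mpr (hsg hx).le
        · exact hconst.sub hint.integrableOn
      rw [integral_sub hconst hint.integrableOn, setIntegral_const, smul_eq_mul, measureReal_def] at hpos'
      linarith
    rw [← hsplit, hmeas]
    nlinarith [mul_le_mul_of_nonneg_right hIA hb0, mul_lt_mul_of_pos_right hIB' ha']
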